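/- Let δ > 0 and let k ≥ 0 be an integer. Define β_k : [−δ, 0) → ℝ by β_k(z) = −1/z − Σ_{j=0}^{k} (1/j!) β_{−1}^{(j)}(−δ)(z+δ)^j with β_{−1}(z) = −1/z. Then β_k(z) ≥ 0 for all z ∈ [−δ, 0), and β_k is nondecreasing on [−δ, 0). In particular the regularized Bermúdez absorption function σ_{B_k} is nonnegative. -/

import Mathlib

/-- The Bermúdez profile `β₋₁(z) = −1/z`. -/
noncomputable def betam1 : ℝ → ℝ := fun z => -1 / z

/-- The regularized Bermúdez profile
`β_k(z) = β₋₁(z) − Σ_{j=0}^{k} (1/j!) β₋₁⁽ʲ⁾(−δ) (z+δ)^j`. -/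
noncomputable def betak (δ : ℝ) (k : ℕ) : ℝ → ℝ := fun z =>
  -1 / z - ∑ j ∈ Finset.range (k + 1),
    (1 / (Nat.factorial j : ℝ)) * iteratedDeriv j betam1 (-δ) * (z + δ) ^ j

lemma prod_neg_one_sub (k : ℕ) :
    (∏ i ∈ Finset.range k, (-1 - (i : ℝ))) = (-1) ^ k * (Nat.factorial k : ℝ) := by
  induction k with
  | zero => simp
  | succ n ih =>
    rw [Finset.prod_range_succ, ih, Nat.factorial_succ]
    push_cast
    ring

lemma iteratedDeriv_betam1 (δ : ℝ) (hδ : 0 < δ) (j : ℕ) :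
    iteratedDeriv j betam1 (-δ) = (Nat.factorial j : ℝ) / δ ^ (j + 1) := by
  have hb : betam1 = fun z : ℝ => -(z⁻¹) := by
    funext z; simp [betam1, neg_div, one_div]
  have h1 : iteratedDeriv j betam1 (-δ) = -(deriv^[j] Inv.inv (-δ)) := by
    rw [hb, iteratedDeriv_fun_neg, iteratedDeriv_eq_iterate]
  rw [h1, iter_deriv_inv]
  have hδ' : (δ : ℝ) ≠ 0 := ne_of_gt hδ
  have h2 : (-δ : ℝ) ^ (-1 - (j : ℤ)) = ((-δ) ^ (j + 1) : ℝ)⁻¹ := by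
    rw [show (-1 - (j : ℤ)) = -((j : ℤ) + 1) by ring, zpow_neg]
    norm_cast
  rw [h2, show ((-δ : ℝ)) ^ (j + 1) = (-1) ^ (j + 1) * δ ^ (j + 1) from neg_pow δ (j+1)]
  rcases Nat.even_or_odd j with he | ho
  · rw [he.neg_one_pow, Even.add_one he |>.neg_one_pow]
    field_simp
  · rw [ho.neg_one_pow, Odd.add_one ho |>.neg_one_pow]
    field_simp

lemma betak_eq (δ : ℝ) (hδ : 0 < δ) (k : ℕ) (z : ℝ) (hz : z ∈ Set.Ico (-δ) (0 : ℝ)) :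
    betak δ k z = ((z + δ) / δ) ^ (k + 1) * (-z)⁻¹ := by
  obtain ⟨hz1, hz2⟩ := hz
  have hzne : z ≠ 0 := ne_of_lt hz2
  have hδne : δ ≠ 0 := ne_of_gt hδ
  have hsum : ∀ j ∈ Finset.range (k + 1),
      (1 / (Nat.factorial j : ℝ)) * iteratedDeriv j betam1 (-δ) * (z + δ) ^ j
        = ((z + δ) / δ) ^ j / δ := by
    intro j _
    rw [iteratedDeriv_betam1 δ hδ j, div_pow]
    have : (Nat.factorial j : ℝ) ≠ 0 := Nat.cast_ne_zero.mpr (Nat.factorial_ne_zero j)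
    field_simp
    all_goals first | (left; trivial) | ring
  rw [betak, Finset.sum_congr rfl hsum, ← Finset.sum_div]
  have hr : ((z + δ) / δ) ≠ 1 := by
    intro h
    have : z + δ = δ := by field_simp at h; linarith
    exact hzne (by linarith)
  rw [geom_sum_eq hr]
  have h1 : ((z + δ) / δ - 1) = z / δ := by field_simp; ring
  rw [h1]
  field_simp
  ring

/-- The regularized Bermúdez profile `β_k` is nonnegative and nondecreasing on `[−δ, 0)`. -/
theorem betak_nonneg_monotone (δ : ℝ) (hδ : 0 < δ) (k : ℕ) :
    (∀ z ∈ Set.Ico (-δ) (0 : ℝ), 0 ≤ betak δ k z) ∧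
      MonotoneOn (betak δ k) (Set.Ico (-δ) (0 : ℝ)) := by
  have key : ∀ z ∈ Set.Ico (-δ) (0 : ℝ),
      betak δ k z = ((z + δ) / δ) ^ (k + 1) * (-z)⁻¹ := betak_eq δ hδ k
  constructor
  · intro z hz
    rw [key z hz]
    have h1 : 0 ≤ (z + δ) / δ := div_nonneg (by linarith [hz.1]) hδ.le
    have h2 : 0 < -z := by linarith [hz.2]
    positivity
  · intro a ha b hb hab
    rw [key a ha, key b hb]
    have ha1 : 0 ≤ (a + δ) / δ := div_nonneg (by linarith [ha.1]) hδ.le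
    have hb2 : 0 < -b := by linarith [hb.2]
    have ha2 : 0 < -a := by linarith [ha.2]
    have hb1 : 0 ≤ (b + δ) / δ := div_nonneg (by linarith [hb.1]) hδ.le
    have hstep : (a + δ) / δ ≤ (b + δ) / δ :=
      div_le_div_of_nonneg_right (by linarith) hδ.le
    have hpow : ((a + δ) / δ) ^ (k + 1) ≤ ((b + δ) / δ) ^ (k + 1) :=
      pow_le_pow_left₀ ha1 hstep (k + 1)
    have hinv : (-a)⁻¹ ≤ (-b)⁻¹ := inv_anti₀ hb2 (by linarith)
    exact mul_le_mul hpow hinv (le_of_lt (inv_pos.mpr ha2)) (by positivity)
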